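/- Let X be a real normed vector space, let (m_n)_{n≥1} be vectors in X and (x'_n)_{n≥1} continuous linear functionals on X such that for every n, ‖m_n‖ = ‖x'_n‖ = x'_n(m_n) = 1 and x'_i(m_n) = 0 for all 1 ≤ i < n. Let 0 < ε < 1 and 0 < δ ≤ 1, and let (z_n)_{n≥1} be vectors in X satisfying ‖z_n − m_n‖ ≤ 2^{1−2n} ε δ. Then for every n ≥ 1 and all real scalars a_1, …, a_n not all zero, the vectors z = a_1 z_1 + ⋯ + a_n z_n and w = a_1 m_1 + ⋯ + a_n m_n satisfy ‖z − w‖ < ε δ ‖w‖, and consequently (1 − ε)‖w‖ < ‖z‖ < (1 + ε)‖w‖. -/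

import Mathlib

private lemma geom_aux (n : ℕ) :
    ∑ j ∈ Finset.range n, (2:ℝ) ^ j / 2 ^ (2 * j + 1) = 1 - (1/2 : ℝ) ^ n := by
  induction n with
  | zero => simp
  | succ k ih =>
    rw [Finset.sum_range_succ, ih, pow_succ]
    have h1 : (2:ℝ) ^ (2 * (k+1) + 1) = 2 ^ k * 2 ^ k * 8 := by ring
    have h2 : (0:ℝ) < 2 ^ k := by positivity
    simp only [div_pow, one_pow]
    field_simp
    ring

/-- Let `(m n)` and `(x' n)` form a biorthogonal system with
`‖m n‖ = ‖x' n‖ = x' n (m n) = 1` and `x' i (m n) = 0` for `i < n`.  If `0 < ε < 1`,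
`0 < δ ≤ 1`, and `(z n)` satisfies `‖z n - m n‖ ≤ ε * δ / 2 ^ (2 * n + 1)`, then for all
`n ≥ 1` and coefficients `a 0, …, a (n-1)` not all zero, setting
`z = ∑_{j<n} a j • z j` and `w = ∑_{j<n} a j • m j` one has `‖z - w‖ < ε * δ * ‖w‖`,
and consequently `(1 - ε) * ‖w‖ < ‖z‖ < (1 + ε) * ‖w‖`. (Indexing starts at `0`,
so the paper's bound `2 ^ (1 - 2 * n) * ε * δ` for `n ≥ 1` becomes
`ε * δ / 2 ^ (2 * n + 1)` for `n ≥ 0`.) -/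
theorem perturbed_sum_norm_estimates {X : Type*} [NormedAddCommGroup X] [NormedSpace ℝ X]
    (m : ℕ → X) (x' : ℕ → (X →L[ℝ] ℝ))
    (hnorm : ∀ n, ‖m n‖ = 1 ∧ ‖x' n‖ = 1 ∧ x' n (m n) = 1)
    (horth : ∀ i n, i < n → x' i (m n) = 0)
    (ε δ : ℝ) (hε0 : 0 < ε) (hε1 : ε < 1) (hδ0 : 0 < δ) (hδ1 : δ ≤ 1)
    (z : ℕ → X)
    (hz : ∀ n, ‖z n - m n‖ ≤ ε * δ / 2 ^ (2 * n + 1))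
    (n : ℕ) (hn : 0 < n) (a : ℕ → ℝ) (ha : ∃ i < n, a i ≠ 0) :
    ‖(∑ j ∈ Finset.range n, a j • z j) - ∑ j ∈ Finset.range n, a j • m j‖
        < ε * δ * ‖∑ j ∈ Finset.range n, a j • m j‖ ∧
      (1 - ε) * ‖∑ j ∈ Finset.range n, a j • m j‖ < ‖∑ j ∈ Finset.range n, a j • z j‖ ∧
      ‖∑ j ∈ Finset.range n, a j • z j‖
        < (1 + ε) * ‖∑ j ∈ Finset.range n, a j • m j‖ := by
  set w : X := ∑ j ∈ Finset.range n, a j • m j with hw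
  set zz : X := ∑ j ∈ Finset.range n, a j • z j with hzz
  -- key coefficient bound
  have key : ∀ i, i < n → |a i| ≤ 2 ^ i * ‖w‖ := by
    intro i
    induction i using Nat.strong_induction_on with
    | _ i ih =>
      intro hi
      have hxw : (x' i) w = (∑ j ∈ Finset.range i, a j * (x' i) (m j)) + a i := by
        rw [hw, map_sum]
        have : ∀ j ∈ Finset.range n, (x' i) (a j • m j) = a j * (x' i) (m j) := by
          intro j _; simp [smul_eq_mul]
        rw [Finset.sum_congr rfl this]
        have hsplit : Finset.range n = Finset.range (i+1) ∪ Finset.Ico (i+1) n := by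
          simp only [Finset.range_eq_Ico]
          exact (Finset.Ico_union_Ico_eq_Ico (by omega) (by omega)).symm
        rw [hsplit, Finset.sum_union (by
          simp [Finset.disjoint_left, Finset.mem_range, Finset.mem_Ico]; omega)]
        have h2 : ∑ j ∈ Finset.Ico (i+1) n, a j * (x' i) (m j) = 0 := by
          apply Finset.sum_eq_zero
          intro j hj
          rw [Finset.mem_Ico] at hj
          rw [horth i j (by omega), mul_zero]
        rw [h2, add_zero, Finset.sum_range_succ, (hnorm i).2.2, mul_one]
      have ha_eq : a i = (x' i) w - ∑ j ∈ Finset.range i, a j * (x' i) (m j) := by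
        linarith [hxw]
      have hb1 : |(x' i) w| ≤ ‖w‖ := by
        have := (x' i).le_opNorm w
        rw [(hnorm i).2.1, one_mul] at this
        simpa using this
      have hb2 : |∑ j ∈ Finset.range i, a j * (x' i) (m j)|
          ≤ ∑ j ∈ Finset.range i, 2 ^ j * ‖w‖ := by
        refine (Finset.abs_sum_le_sum_abs _ _).trans ?_
        apply Finset.sum_le_sum
        intro j hj
        rw [Finset.mem_range] at hj
        have h1 : |(x' i) (m j)| ≤ 1 := by
          have := (x' i).le_opNorm (m j)
          rw [(hnorm i).2.1, (hnorm j).1, one_mul] at this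
          simpa using this
        have h2 : |a j| ≤ 2 ^ j * ‖w‖ := ih j hj (by omega)
        calc |a j * (x' i) (m j)| = |a j| * |(x' i) (m j)| := abs_mul _ _
          _ ≤ (2 ^ j * ‖w‖) * 1 := by
              apply mul_le_mul h2 h1 (abs_nonneg _)
              positivity
          _ = 2 ^ j * ‖w‖ := mul_one _
      have hgeom : ∑ j ∈ Finset.range i, (2:ℝ) ^ j * ‖w‖ = (2 ^ i - 1) * ‖w‖ := by
        rw [← Finset.sum_mul, geom_sum_eq (by norm_num : (2:ℝ) ≠ 1)]
        norm_num
      calc |a i| ≤ |(x' i) w| + |∑ j ∈ Finset.range i, a j * (x' i) (m j)| := by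
            rw [ha_eq]; exact abs_sub _ _
        _ ≤ ‖w‖ + (2 ^ i - 1) * ‖w‖ := by rw [← hgeom]; linarith
        _ = 2 ^ i * ‖w‖ := by ring
  -- w ≠ 0
  obtain ⟨i0, hi0, hai0⟩ := ha
  have hwpos : 0 < ‖w‖ := by
    by_contra h
    push_neg at h
    have hw0 : ‖w‖ = 0 := le_antisymm h (norm_nonneg _)
    have := key i0 hi0
    rw [hw0, mul_zero] at this
    exact hai0 (abs_nonneg (a i0) |>.antisymm' this |> abs_eq_zero.mp)
  -- main estimate
  have hdiff : zz - w = ∑ j ∈ Finset.range n, a j • (z j - m j) := by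
    rw [hzz, hw, ← Finset.sum_sub_distrib]
    congr 1; ext j; rw [smul_sub]
  have hbound : ‖zz - w‖ ≤ ∑ j ∈ Finset.range n, 2 ^ j * ‖w‖ * (ε * δ / 2 ^ (2 * j + 1)) := by
    rw [hdiff]
    refine (norm_sum_le _ _).trans ?_
    apply Finset.sum_le_sum
    intro j hj
    rw [Finset.mem_range] at hj
    rw [norm_smul, Real.norm_eq_abs]
    exact mul_le_mul (key j hj) (hz j) (norm_nonneg _) (by positivity)
  have hgsum : ∑ j ∈ Finset.range n, (2:ℝ) ^ j * ‖w‖ * (ε * δ / 2 ^ (2 * j + 1))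
      = ε * δ * ‖w‖ * (1 - (1/2 : ℝ) ^ n) := by
    have heq : ∀ j, (2:ℝ) ^ j * ‖w‖ * (ε * δ / 2 ^ (2 * j + 1))
        = ((2:ℝ) ^ j / 2 ^ (2 * j + 1)) * (ε * δ * ‖w‖) := by
      intro j; ring
    rw [Finset.sum_congr rfl fun j _ => heq j, ← Finset.sum_mul, geom_aux, mul_comm]
  have hmain : ‖zz - w‖ < ε * δ * ‖w‖ := by
    have h1 : (0:ℝ) < (1/2 : ℝ) ^ n := by positivity
    have h2 : ε * δ * ‖w‖ * (1 - (1/2 : ℝ) ^ n) < ε * δ * ‖w‖ := by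
      nlinarith [mul_pos (mul_pos hε0 hδ0) hwpos]
    calc ‖zz - w‖ ≤ _ := hbound
      _ = ε * δ * ‖w‖ * (1 - (1/2 : ℝ) ^ n) := hgsum
      _ < ε * δ * ‖w‖ := h2
  refine ⟨hmain, ?_, ?_⟩
  · have h1 : ‖zz - w‖ < ε * ‖w‖ := by
      calc ‖zz - w‖ < ε * δ * ‖w‖ := hmain
        _ ≤ ε * 1 * ‖w‖ := by
            nlinarith [mul_nonneg (mul_nonneg hε0.le (sub_nonneg.mpr hδ1)) hwpos.le]
        _ = ε * ‖w‖ := by ring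
    have h2 : ‖w‖ - ‖zz‖ ≤ ‖zz - w‖ := by
      have := norm_sub_norm_le w zz
      have hne : ‖w - zz‖ = ‖zz - w‖ := by rw [← norm_neg, neg_sub]
      linarith
    linarith
  · have h1 : ‖zz - w‖ < ε * ‖w‖ := by
      calc ‖zz - w‖ < ε * δ * ‖w‖ := hmain
        _ ≤ ε * 1 * ‖w‖ := by
            nlinarith [mul_nonneg (mul_nonneg hε0.le (sub_nonneg.mpr hδ1)) hwpos.le]
        _ = ε * ‖w‖ := by ring
    have h2 : ‖zz‖ - ‖w‖ ≤ ‖zz - w‖ := norm_sub_norm_le _ _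
    linarith
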